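/- Let K be a field of characteristic 0, d, R ∈ K nonzero, √R a fixed square root of R in an algebraic closure, y a root of Z^p − d − √R and y' a root of Z^p − d + √R, where p ≥ 3 is odd. Set z = y·y', D = d² − R ≠ 0, and u = z^((p−1)/2)(y + y'). Then u is a root of the polynomial f(Z) = D^((p−1)/2) · Σ_{k=0}^{(p−1)/2} (c_{2k+1}/D^k) Z^{2k+1} − 2d·D^((p−1)/2), where c_{2k+1} = (−1)^((p−1)/2−k) · (p/((p+1)/2 + k)) · C((p+1)/2 + k, 2k+1). -/

import Mathlib

open Finset

/-- The coefficient `c_{2k+1}` of the paper. -/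
def cOdd (p k : ℕ) : ℚ :=
  (-1) ^ ((p - 1) / 2 - k) * ((p : ℚ) / (((p + 1) / 2 + k : ℕ) : ℚ)) *
    (Nat.choose ((p + 1) / 2 + k) (2 * k + 1) : ℚ)

/-- Signed Dickson coefficient. -/
def dicksonC (n j : ℕ) : ℤ :=
  if 2 * j ≤ n then
    (-1 : ℤ) ^ j * (((n - j).choose j : ℤ) +
      match j with
      | 0 => 0
      | Nat.succ i => ((n - (i + 1) - 1).choose i : ℤ))
  else 0

lemma dicksonC_zero (n : ℕ) : dicksonC n 0 = 1 := by simp [dicksonC]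

lemma dicksonC_of_lt {n j : ℕ} (h : n < 2 * j) : dicksonC n j = 0 := by
  simp [dicksonC, Nat.not_le.2 h]

lemma dicksonC_succ (n i : ℕ) (h : 2 * (i+1) ≤ n) :
    dicksonC n (i+1) = (-1:ℤ)^(i+1) * (((n - (i+1)).choose (i+1) : ℤ) + ((n - i - 2).choose i : ℤ)) := by
  have : n - (i+1) - 1 = n - i - 2 := by omega
  simp [dicksonC, if_pos h, this]

lemma dicksonC_rec (n j : ℕ) (hn : 1 ≤ n) (hj : 1 ≤ j) :
    dicksonC (n + 2) j = dicksonC (n + 1) j - dicksonC n (j - 1) := by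
  obtain ⟨j', rfl⟩ : ∃ j', j = j' + 1 := ⟨j - 1, by omega⟩
  simp only [Nat.add_sub_cancel]
  rcases le_or_gt (2 * (j' + 1)) n with hA | hBC
  · -- main case: Pascal twice
    obtain ⟨m, rfl⟩ : ∃ m, n = m + 2 * j' + 2 := ⟨n - 2*j' - 2, by omega⟩
    rw [dicksonC_succ (m + 2*j' + 2 + 2) j' (by omega),
        dicksonC_succ (m + 2*j' + 2 + 1) j' (by omega)]
    have e1 : m + 2*j' + 2 + 2 - (j' + 1) = m + j' + 3 := by omega
    have e2 : m + 2*j' + 2 + 2 - j' - 2 = m + j' + 2 := by omega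
    have e3 : m + 2*j' + 2 + 1 - (j' + 1) = m + j' + 2 := by omega
    have e4 : m + 2*j' + 2 + 1 - j' - 2 = m + j' + 1 := by omega
    rw [e1, e2, e3, e4]
    have p1 : (m + j' + 3).choose (j' + 1)
        = (m + j' + 2).choose j' + (m + j' + 2).choose (j'+1) := by
      have := Nat.choose_succ_succ (m + j' + 2) j'
      simpa using this
    rcases Nat.eq_zero_or_pos j' with rfl | hj'
    · rw [dicksonC_zero]
      simp only [p1]
      push_cast
      simp [Nat.choose_one_right]
      ring
    · obtain ⟨i, rfl⟩ : ∃ i, j' = i + 1 := ⟨j' - 1, by omega⟩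
      rw [dicksonC_succ (m + 2*(i+1) + 2) i (by omega)]
      have e5 : m + 2*(i+1) + 2 - (i+1) = m + (i+1) + 2 := by omega
      have e6 : m + 2*(i+1) + 2 - i - 2 = m + (i+1) + 1 := by omega
      rw [e5, e6]
      have p2 : (m + (i+1) + 2).choose (i + 1)
          = (m + (i+1) + 1).choose i + (m + (i+1) + 1).choose (i+1) := by
        have := Nat.choose_succ_succ (m + (i+1) + 1) i
        simpa using this
      push_cast [p1, p2]
      ring
  rcases eq_or_lt_of_le (by omega : n + 1 ≤ 2 * (j' + 1)) with hB | hBC2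
  · -- n = 2j' + 1
    obtain rfl : n = 2 * j' + 1 := by omega
    rw [dicksonC_succ (2*j' + 1 + 2) j' (by omega),
        dicksonC_succ (2*j' + 1 + 1) j' (by omega)]
    have e1 : 2*j' + 1 + 2 - (j' + 1) = j' + 2 := by omega
    have e2 : 2*j' + 1 + 2 - j' - 2 = j' + 1 := by omega
    have e3 : 2*j' + 1 + 1 - (j' + 1) = j' + 1 := by omega
    have e4 : 2*j' + 1 + 1 - j' - 2 = j' := by omega
    rw [e1, e2, e3, e4]
    rcases Nat.eq_zero_or_pos j' with rfl | hj'
    · rw [dicksonC_zero]; norm_num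
    · obtain ⟨i, rfl⟩ : ∃ i, j' = i + 1 := ⟨j' - 1, by omega⟩
      rw [dicksonC_succ (2*(i+1) + 1) i (by omega)]
      have e5 : 2*(i+1) + 1 - (i+1) = i + 2 := by omega
      have e6 : 2*(i+1) + 1 - i - 2 = i + 1 := by omega
      rw [e5, e6]
      simp only [Nat.choose_succ_self_right, Nat.choose_self]
      push_cast
      ring
  rcases eq_or_lt_of_le (by omega : n + 2 ≤ 2 * (j' + 1)) with hCeq | hD
  · -- n = 2j'
    obtain rfl : n = 2 * j' := by omega
    have hj' : 1 ≤ j' := by omega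
    obtain ⟨i, rfl⟩ : ∃ i, j' = i + 1 := ⟨j' - 1, by omega⟩
    rw [dicksonC_of_lt (by omega : 2*(i+1) + 1 < 2*(i+1+1)),
      dicksonC_succ (2*(i+1) + 2) (i+1) (by omega),
      dicksonC_succ (2*(i+1)) i (by omega)]
    have e1 : 2*(i+1) + 2 - (i+1+1) = i + 2 := by omega
    have e2 : 2*(i+1) + 2 - (i+1) - 2 = i + 1 := by omega
    have e5 : 2*(i+1) - (i+1) = i + 1 := by omega
    have e6 : 2*(i+1) - i - 2 = i := by omega
    rw [e1, e2, e5, e6]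
    simp only [Nat.choose_self]
    push_cast
    ring
  · rw [dicksonC_of_lt (by omega), dicksonC_of_lt (by omega)]
    rcases Nat.eq_zero_or_pos j' with rfl | hj'
    · omega
    · rw [dicksonC_of_lt (by omega)]; ring

lemma dickson_key {A : Type*} [CommRing A] (n : ℕ) (x y : A) :
    (x ^ (n+1) + y ^ (n+1)) * (x + y) ^ (n+1)
      = ∑ j ∈ Finset.range (n + 2),
          (dicksonC (n+1) j : A) * ((x * y) ^ j * ((x + y) ^ 2) ^ (n + 1 - j)) := by
  induction n using Nat.twoStepInduction with
  | zero =>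
    simp [Finset.sum_range_succ, dicksonC_zero, dicksonC_of_lt (by norm_num : (1:ℕ) < 2*1)]
    ring
  | one =>
    have h0 : dicksonC 2 0 = 1 := dicksonC_zero 2
    have h1 : dicksonC 2 1 = -2 := by decide
    have h2 : dicksonC 2 2 = 0 := dicksonC_of_lt (by norm_num)
    simp [Finset.sum_range_succ, h0, h1, h2]
    ring
  | more n ih1 ih2 =>
    -- goal at degree n+3
    have step : (x ^ (n+3) + y ^ (n+3)) * (x + y) ^ (n+3)
        = (x+y)^2 * ((x ^ (n+2) + y ^ (n+2)) * (x + y) ^ (n+2))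
          - (x*y) * (x+y)^2 * ((x ^ (n+1) + y ^ (n+1)) * (x + y) ^ (n+1)) := by
      ring
    rw [step, ih2, ih1, Finset.mul_sum, Finset.mul_sum]
    have L1 : ∀ j ∈ Finset.range (n+3),
        (x+y)^2 * ((dicksonC (n+2) j : A) * ((x*y)^j * ((x+y)^2)^(n+2-j)))
        = (dicksonC (n+2) j : A) * ((x*y)^j * ((x+y)^2)^(n+3-j)) := by
      intro j hj
      rw [Finset.mem_range] at hj
      have : n + 3 - j = (n + 2 - j) + 1 := by omega
      rw [this, pow_succ]
      ring
    rw [Finset.sum_congr rfl L1]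
    have L2 : ∀ j ∈ Finset.range (n+2),
        (x*y) * (x+y)^2 * ((dicksonC (n+1) j : A) * ((x*y)^j * ((x+y)^2)^(n+1-j)))
        = (dicksonC (n+1) j : A) * ((x*y)^(j+1) * ((x+y)^2)^(n+2-j)) := by
      intro j hj
      rw [Finset.mem_range] at hj
      have : n + 2 - j = (n + 1 - j) + 1 := by omega
      rw [this, pow_succ, pow_succ]
      ring
    rw [Finset.sum_congr rfl L2]
    -- now expand target
    rw [Finset.sum_range_succ' (fun j => (dicksonC (n+3) j : A) * ((x*y)^j * ((x+y)^2)^(n+3-j))) (n+3)]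
    have key0 : (dicksonC (n+3) 0 : A) * ((x*y)^0 * ((x+y)^2)^(n+3-0)) = ((x+y)^2)^(n+3) := by
      rw [dicksonC_zero]; push_cast; ring
    rw [key0]
    have keyrec : ∀ j ∈ Finset.range (n+3),
        (dicksonC (n+3) (j+1) : A) * ((x*y)^(j+1) * ((x+y)^2)^(n+3-(j+1)))
        = (dicksonC (n+2) (j+1) : A) * ((x*y)^(j+1) * ((x+y)^2)^(n+2-j))
          - (dicksonC (n+1) j : A) * ((x*y)^(j+1) * ((x+y)^2)^(n+2-j)) := by
      intro j hj
      have hr : dicksonC (n+3) (j+1) = dicksonC (n+2) (j+1) - dicksonC (n+1) j := by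
        have := dicksonC_rec (n+1) (j+1) (by omega) (by omega)
        simpa using this
      have : n + 3 - (j+1) = n + 2 - j := by omega
      rw [this, hr]
      push_cast
      ring
    rw [Finset.sum_congr rfl keyrec, Finset.sum_sub_distrib]
    -- first sum: extend to match
    have E1 : ∑ j ∈ Finset.range (n+3),
        (dicksonC (n+2) (j+1) : A) * ((x*y)^(j+1) * ((x+y)^2)^(n+2-j))
        + ((x+y)^2)^(n+3)
        = ∑ j ∈ Finset.range (n+4),
            (dicksonC (n+2) j : A) * ((x*y)^j * ((x+y)^2)^(n+3-j)) := by
      rw [Finset.sum_range_succ' (fun j => (dicksonC (n+2) j : A) * ((x*y)^j * ((x+y)^2)^(n+3-j))) (n+3)]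
      rw [dicksonC_zero]
      have : ∀ j ∈ Finset.range (n+3), (dicksonC (n+2) (j+1) : A) * ((x*y)^(j+1) * ((x+y)^2)^(n+3-(j+1)))
          = (dicksonC (n+2) (j+1) : A) * ((x*y)^(j+1) * ((x+y)^2)^(n+2-j)) := by
        intro j hj
        have : n + 3 - (j+1) = n + 2 - j := by omega
        rw [this]
      rw [Finset.sum_congr rfl this]
      push_cast
      ring
    have E2 : ∑ j ∈ Finset.range (n+4),
        (dicksonC (n+2) j : A) * ((x*y)^j * ((x+y)^2)^(n+3-j))
        = ∑ j ∈ Finset.range (n+3),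
            (dicksonC (n+2) j : A) * ((x*y)^j * ((x+y)^2)^(n+3-j)) := by
      rw [Finset.sum_range_succ]
      have : dicksonC (n+2) (n+3) = 0 := dicksonC_of_lt (by omega)
      rw [this]
      push_cast; ring
    have E3 : ∑ j ∈ Finset.range (n+3),
        (dicksonC (n+1) j : A) * ((x*y)^(j+1) * ((x+y)^2)^(n+2-j))
        = ∑ j ∈ Finset.range (n+2),
            (dicksonC (n+1) j : A) * ((x*y)^(j+1) * ((x+y)^2)^(n+2-j)) := by
      rw [Finset.sum_range_succ]
      have : dicksonC (n+1) (n+2) = 0 := dicksonC_of_lt (by omega)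
      rw [this]
      push_cast; ring
    linear_combination -E1 - E2 + E3

lemma cOdd_eq_dicksonC (m k : ℕ) (hk : k ≤ m) :
    cOdd (2*m+1) k = (dicksonC (2*m+1) (m - k) : ℚ) := by
  have h1 : (2*m+1 - 1)/2 = m := by omega
  have h2 : (2*m+1 + 1)/2 = m+1 := by omega
  rw [cOdd, h1, h2]
  rcases eq_or_lt_of_le hk with rfl | hk'
  · simp only [Nat.sub_self, dicksonC_zero, pow_zero, one_mul]
    have e : k + 1 + k = 2*k+1 := by omega
    rw [e, Nat.choose_self]
    have : ((2*k+1 : ℕ) : ℚ) ≠ 0 := by positivity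
    push_cast at this ⊢
    field_simp
  · obtain ⟨i, rfl⟩ : ∃ i, m = k + i + 1 := ⟨m - k - 1, by omega⟩
    have e0 : k + i + 1 - k = i + 1 := by omega
    rw [e0, dicksonC_succ (2*(k+i+1)+1) i (by omega)]
    have e1 : 2*(k+i+1)+1 - (i+1) = 2*k+i+2 := by omega
    have e2 : 2*(k+i+1)+1 - i - 2 = 2*k+i+1 := by omega
    rw [e1, e2]
    have s1 : (2*k+i+2).choose (i+1) = (2*k+i+2).choose (2*k+1) := by
      have h := Nat.choose_symm (by omega : 2*k+1 ≤ 2*k+i+2)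
      have e : 2*k+i+2 - (2*k+1) = i+1 := by omega
      rw [e] at h
      exact h.symm ▸ h
    have s2 : (2*k+i+1).choose i = (2*k+i+1).choose (2*k+1) := by
      have h := Nat.choose_symm (by omega : 2*k+1 ≤ 2*k+i+1)
      have e : 2*k+i+1 - (2*k+1) = i := by omega
      rw [e] at h
      exact h.symm ▸ h
    rw [s1, s2]
    have hnat : (2*k+i+2) * Nat.choose (2*k+i+1) (2*k+1) = Nat.choose (2*k+i+2) (2*k+1) * (i+1) := by
      have h := Nat.add_one_mul_choose_eq (2*k+i+1) i
      rw [s2] at h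
      have : (2*k+i+2).choose (i+1) = (2*k+i+2).choose (2*k+1) := s1
      -- h : (2k+i+2) * C(2k+i+1, 2k+1) = C(2k+i+2, i+1) * (i+1)
      simpa [Nat.succ_eq_add_one, this] using h
    have hE : k + i + 1 + 1 + k = 2*k+i+2 := by omega
    rw [hE]
    have hne : ((2*k+i+2 : ℕ) : ℚ) ≠ 0 := by positivity
    have hcast := congrArg (fun n : ℕ => (n : ℚ)) hnat
    push_cast at hcast ⊢
    field_simp
    linear_combination -hcast

theorem u_is_root_of_f (K : Type*) [Field K] [CharZero K]
    (p : ℕ) (hp : Odd p) (hp3 : 3 ≤ p)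
    (d R : K) (hd : d ≠ 0) (hR : R ≠ 0) (hD : d ^ 2 - R ≠ 0)
    (sqrtR y y' : AlgebraicClosure K)
    (hsq : sqrtR ^ 2 = algebraMap K (AlgebraicClosure K) R)
    (hy : y ^ p = algebraMap K (AlgebraicClosure K) d + sqrtR)
    (hy' : y' ^ p = algebraMap K (AlgebraicClosure K) d - sqrtR) :
    algebraMap K (AlgebraicClosure K) ((d ^ 2 - R) ^ ((p - 1) / 2)) *
        (∑ k ∈ Finset.range ((p - 1) / 2 + 1),
          ((cOdd p k : AlgebraicClosure K) /
              algebraMap K (AlgebraicClosure K) (d ^ 2 - R) ^ k) *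
            ((y * y') ^ ((p - 1) / 2) * (y + y')) ^ (2 * k + 1))
      - 2 * algebraMap K (AlgebraicClosure K) d *
          algebraMap K (AlgebraicClosure K) ((d ^ 2 - R) ^ ((p - 1) / 2)) = 0 := by
  obtain ⟨m, rfl⟩ : ∃ m, p = 2 * m + 1 := by
    obtain ⟨c, hc⟩ := hp; exact ⟨c, by omega⟩
  have hm1 : (2*m+1 - 1)/2 = m := by omega
  rw [hm1]
  have hinj : Function.Injective (algebraMap K (AlgebraicClosure K)) :=
    (algebraMap K (AlgebraicClosure K)).injective
  have hD0 : algebraMap K (AlgebraicClosure K) (d^2 - R) ≠ 0 :=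
    (map_ne_zero_iff _ hinj).2 hD
  have hd0 : algebraMap K (AlgebraicClosure K) d ≠ 0 := (map_ne_zero_iff _ hinj).2 hd
  have hsum : y^(2*m+1) + y'^(2*m+1) = 2 * algebraMap K (AlgebraicClosure K) d := by
    rw [hy, hy']; ring
  have hs : y + y' ≠ 0 := by
    intro h
    have hyy : y' = -y := by linear_combination h
    rw [hyy, Odd.neg_pow ⟨m, by ring⟩] at hsum
    have h0 : (0 : AlgebraicClosure K) = 2 * algebraMap K (AlgebraicClosure K) d := by
      linear_combination hsum
    rcases mul_eq_zero.1 h0.symm with h2 | hFd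
    · exact two_ne_zero h2
    · exact hd0 hFd
  have haD : (y*y')^(2*m+1) = algebraMap K (AlgebraicClosure K) (d^2 - R) := by
    rw [mul_pow, hy, hy', map_sub, map_pow]
    linear_combination -hsq
  have ha : y * y' ≠ 0 := by
    intro h
    apply hD0
    rw [← haD, h, zero_pow (by omega)]
  have hkey := dickson_key (2*m) y y'
  rw [hsum] at hkey
  rw [sub_eq_zero]
  have hsp : (y + y')^(2*m+1) ≠ 0 := pow_ne_zero _ hs
  apply mul_right_cancel₀ hsp
  have hterm : ∀ k ∈ Finset.range (m+1),
      algebraMap K (AlgebraicClosure K) (d^2-R)^m *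
        (((cOdd (2*m+1) k : ℚ) : AlgebraicClosure K) /
            algebraMap K (AlgebraicClosure K) (d^2-R)^k *
          ((y*y')^m * (y+y'))^(2*k+1)) * (y+y')^(2*m+1)
      = (dicksonC (2*m+1) (m-k) : AlgebraicClosure K) *
          ((y*y')^(m-k) * ((y+y')^2)^(2*m+1-(m-k))) *
          algebraMap K (AlgebraicClosure K) (d^2-R)^m := by
    intro k hk
    rw [Finset.mem_range] at hk
    obtain ⟨t, rfl⟩ : ∃ t, m = k + t := ⟨m - k, by omega⟩
    rw [cOdd_eq_dicksonC (k+t) k (by omega)]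
    have e0 : k + t - k = t := by omega
    rw [e0]
    have e1 : 2*(k+t)+1 - t = k+t+1+k := by omega
    rw [e1, ← haD]
    push_cast
    revert ha
    generalize y * y' = a
    generalize y + y' = s
    intro ha
    field_simp
    ring
  calc algebraMap K (AlgebraicClosure K) ((d^2-R)^m) *
        (∑ k ∈ Finset.range (m+1),
          ((cOdd (2*m+1) k : AlgebraicClosure K) /
              algebraMap K (AlgebraicClosure K) (d^2-R) ^ k) *
            ((y * y') ^ m * (y + y')) ^ (2*k+1)) * (y+y')^(2*m+1)
      = ∑ k ∈ Finset.range (m+1),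
          algebraMap K (AlgebraicClosure K) (d^2-R)^m *
            (((cOdd (2*m+1) k : ℚ) : AlgebraicClosure K) /
                algebraMap K (AlgebraicClosure K) (d^2-R)^k *
              ((y*y')^m * (y+y'))^(2*k+1)) * (y+y')^(2*m+1) := by
        rw [map_pow, Finset.mul_sum, Finset.sum_mul]
    _ = ∑ k ∈ Finset.range (m+1),
          (dicksonC (2*m+1) (m-k) : AlgebraicClosure K) *
            ((y*y')^(m-k) * ((y+y')^2)^(2*m+1-(m-k))) *
            algebraMap K (AlgebraicClosure K) (d^2-R)^m :=
        Finset.sum_congr rfl hterm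
    _ = ∑ j ∈ Finset.range (m+1),
          (dicksonC (2*m+1) j : AlgebraicClosure K) *
            ((y*y')^j * ((y+y')^2)^(2*m+1-j)) *
            algebraMap K (AlgebraicClosure K) (d^2-R)^m := by
        have hrefl := Finset.sum_range_reflect (fun j =>
          (dicksonC (2*m+1) j : AlgebraicClosure K) *
            ((y*y')^j * ((y+y')^2)^(2*m+1-j)) *
            algebraMap K (AlgebraicClosure K) (d^2-R)^m) (m+1)
        simpa using hrefl
    _ = ∑ j ∈ Finset.range (2*m+2),
          (dicksonC (2*m+1) j : AlgebraicClosure K) *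
            ((y*y')^j * ((y+y')^2)^(2*m+1-j)) *
            algebraMap K (AlgebraicClosure K) (d^2-R)^m := by
        apply Finset.sum_subset
        · apply Finset.range_subset_range.2; omega
        · intro j hj hnj
          rw [Finset.mem_range] at hj
          rw [Finset.mem_range, not_lt] at hnj
          rw [dicksonC_of_lt (by omega : 2*m+1 < 2*j)]
          push_cast
          ring
    _ = (2 * algebraMap K (AlgebraicClosure K) d * (y+y')^(2*m+1)) *
          algebraMap K (AlgebraicClosure K) (d^2-R)^m := by
        rw [hkey, Finset.sum_mul]
    _ = 2 * algebraMap K (AlgebraicClosure K) d *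
          algebraMap K (AlgebraicClosure K) ((d^2-R)^m) * (y+y')^(2*m+1) := by
        rw [map_pow]; ring
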